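/- With the recursively constructed point set P_M and the function δ as defined, for any indices i₁ < i₂ < ... < i_n, one has δ(p_{i₁}, p_{i_n}) = max over 1 ≤ j ≤ n-1 of δ(p_{i_j}, p_{i_{j+1}}). -/

import Mathlib

def deltaFn (M i j : ℕ) : ℕ :=
  Nat.findGreatest
    (fun t => 1 ≤ t ∧ i / 2 ^ (t - 1) % 2 = 0 ∧ j / 2 ^ (t - 1) = i / 2 ^ (t - 1) + 1) M

private lemma quotEq_exists (a b : ℕ) : ∃ t, a / 2 ^ t = b / 2 ^ t := by
  refine ⟨a + b, ?_⟩
  rw [Nat.div_eq_of_lt, Nat.div_eq_of_lt]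
  · exact lt_of_lt_of_le b.lt_two_pow_self (Nat.pow_le_pow_right (by norm_num) (by omega))
  · exact lt_of_lt_of_le a.lt_two_pow_self (Nat.pow_le_pow_right (by norm_num) (by omega))

noncomputable def Tfn (a b : ℕ) : ℕ := Nat.find (quotEq_exists a b)

lemma Tfn_spec (a b : ℕ) : a / 2 ^ Tfn a b = b / 2 ^ Tfn a b := Nat.find_spec (quotEq_exists a b)

lemma Tfn_le {a b t : ℕ} (h : a / 2 ^ t = b / 2 ^ t) : Tfn a b ≤ t := Nat.find_le h

lemma Tfn_min {a b s : ℕ} (h : s < Tfn a b) : a / 2 ^ s ≠ b / 2 ^ s :=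
  Nat.find_min (quotEq_exists a b) h

lemma quotEq_mono {a b s t : ℕ} (hst : s ≤ t) (h : a / 2 ^ s = b / 2 ^ s) :
    a / 2 ^ t = b / 2 ^ t := by
  induction t, hst using Nat.le_induction with
  | base => exact h
  | succ t hst ih =>
    rw [pow_succ, ← Nat.div_div_eq_div_mul, ← Nat.div_div_eq_div_mul, ih]

lemma quotEq_Tfn {a b t : ℕ} (h : Tfn a b ≤ t) : a / 2 ^ t = b / 2 ^ t :=
  quotEq_mono h (Tfn_spec a b)

/-- The predicate in `deltaFn` holds exactly at `t = Tfn a b`, for `a < b`. -/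
lemma prop_iff {a b t : ℕ} (hab : a < b) :
    (1 ≤ t ∧ a / 2 ^ (t - 1) % 2 = 0 ∧ b / 2 ^ (t - 1) = a / 2 ^ (t - 1) + 1) ↔ t = Tfn a b := by
  constructor
  · rintro ⟨ht, heven, hsucc⟩
    have hq : a / 2 ^ t = b / 2 ^ t := by
      have : t = (t - 1) + 1 := by omega
      rw [this, pow_succ, ← Nat.div_div_eq_div_mul, ← Nat.div_div_eq_div_mul, hsucc]
      omega
    have h1 : Tfn a b ≤ t := Tfn_le hq
    have h2 : ¬ (Tfn a b ≤ t - 1) := by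
      intro hle
      have := quotEq_Tfn (a := a) (b := b) hle
      omega
    omega
  · rintro rfl
    have h1 : 1 ≤ Tfn a b := by
      rcases Nat.eq_zero_or_pos (Tfn a b) with h | h
      · exfalso
        have := Tfn_spec a b
        rw [h] at this
        simp at this
        omega
      · exact h
    have hne : a / 2 ^ (Tfn a b - 1) ≠ b / 2 ^ (Tfn a b - 1) := Tfn_min (by omega)
    have hle : a / 2 ^ (Tfn a b - 1) ≤ b / 2 ^ (Tfn a b - 1) :=
      Nat.div_le_div_right hab.le
    have hq : a / 2 ^ (Tfn a b - 1) / 2 = b / 2 ^ (Tfn a b - 1) / 2 := by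
      have h2 : Tfn a b = (Tfn a b - 1) + 1 := by omega
      have := Tfn_spec a b
      rw [h2, pow_succ, ← Nat.div_div_eq_div_mul, ← Nat.div_div_eq_div_mul] at this
      exact this
    refine ⟨h1, ?_, ?_⟩ <;> omega

lemma delta_eq_Tfn {M a b : ℕ} (hab : a < b) (hb : b < 2 ^ M) :
    deltaFn M a b = Tfn a b := by
  have hTM : Tfn a b ≤ M :=
    Tfn_le (by rw [Nat.div_eq_of_lt (lt_trans hab hb), Nat.div_eq_of_lt hb])
  rw [deltaFn, Nat.findGreatest_eq_iff]
  refine ⟨hTM, fun _ => (prop_iff hab).mpr rfl, fun n h1 _ hP => ?_⟩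
  have := (prop_iff hab).mp hP
  omega

lemma Tfn_max {a b c : ℕ} (hab : a ≤ b) (hbc : b ≤ c) :
    Tfn a c = max (Tfn a b) (Tfn b c) := by
  apply le_antisymm
  · apply Tfn_le
    calc a / 2 ^ max (Tfn a b) (Tfn b c) = b / 2 ^ max (Tfn a b) (Tfn b c) :=
          quotEq_Tfn (le_max_left _ _)
      _ = c / 2 ^ max (Tfn a b) (Tfn b c) := quotEq_Tfn (le_max_right _ _)
  · have hac := Tfn_spec a c
    have h1 : a / 2 ^ Tfn a c ≤ b / 2 ^ Tfn a c := Nat.div_le_div_right hab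
    have h2 : b / 2 ^ Tfn a c ≤ c / 2 ^ Tfn a c := Nat.div_le_div_right hbc
    have hab' : a / 2 ^ Tfn a c = b / 2 ^ Tfn a c := by omega
    have hbc' : b / 2 ^ Tfn a c = c / 2 ^ Tfn a c := by omega
    exact max_le (Tfn_le hab') (Tfn_le hbc')

lemma Tfn_chain : ∀ (n : ℕ), 1 ≤ n → ∀ (f : Fin (n + 1) → ℕ), Monotone f →
    Tfn (f 0) (f (Fin.last n)) =
      Finset.univ.sup (fun j : Fin n => Tfn (f j.castSucc) (f j.succ)) := by
  intro n
  induction n with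
  | zero => omega
  | succ m ih =>
    intro _ f hf
    rcases Nat.eq_zero_or_pos m with hm | hm
    · subst hm
      rw [Fin.univ_castSuccEmb]
      simp [Fin.last]
    · have key : Tfn (f 0) (f (Fin.last (m + 1))) =
          max (Tfn (f 0) (f ((Fin.last m).castSucc))) (Tfn (f ((Fin.last m).castSucc)) (f (Fin.last (m + 1)))) := by
        apply Tfn_max (hf (Fin.zero_le _)) (hf (Fin.le_last _))
      rw [key, Fin.univ_castSuccEmb, Finset.sup_cons, Finset.sup_map]
      have ihm := ih hm (f ∘ Fin.castSucc) (hf.comp (Fin.strictMono_castSucc).monotone)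
      simp only [Function.comp_def, Fin.castSucc_zero] at ihm
      have hs : ((fun j : Fin (m + 1) => Tfn (f j.castSucc) (f j.succ)) ∘ ⇑Fin.castSuccEmb) =
          fun j : Fin m => Tfn (f j.castSucc.castSucc) (f j.succ.castSucc) := by
        funext j
        show Tfn (f (Fin.castSucc j).castSucc) (f (Fin.castSucc j).succ) = _
        rw [Fin.succ_castSucc]
      rw [hs, ← ihm, Fin.succ_last, sup_comm]

theorem stepping_up_property_B (M n : ℕ) (f : Fin (n + 1) → ℕ)
    (hf : StrictMono f) (hbound : ∀ a, f a < 2 ^ M) (hn : 1 ≤ n) :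
    deltaFn M (f 0) (f (Fin.last n)) =
      Finset.univ.sup (fun j : Fin n => deltaFn M (f j.castSucc) (f j.succ)) := by
  have h0 : (0 : Fin (n + 1)) < Fin.last n := by
    rw [Fin.lt_iff_val_lt_val]
    simpa using (show 0 < n by omega)
  rw [delta_eq_Tfn (hf h0) (hbound _)]
  have hsup : Finset.univ.sup (fun j : Fin n => deltaFn M (f j.castSucc) (f j.succ)) =
      Finset.univ.sup (fun j : Fin n => Tfn (f j.castSucc) (f j.succ)) := by
    apply Finset.sup_congr rfl
    intro j _
    exact delta_eq_Tfn (hf (show j.castSucc < j.succ from Fin.castSucc_lt_succ)) (hbound _)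
  rw [hsup]
  exact Tfn_chain n hn f hf.monotone
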